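/- Let D be a finite persistence diagram with total lifespan L_D = Σ_{(b,d)∈D}(d−b) and minimum lifespan δ_D = min_{(b,d)∈D}(d−b) > 0, and let σ > 0. Then ‖G_D‖₁ ≤ (1 + σ/(√π·δ_D))·L_D, where G_D(t) = Σ_{(b,d)∈D} Φ((t−b)/σ)·Φ((d−t)/σ). -/

import Mathlib

open MeasureTheory Real Filter Topology

noncomputable def phi (t : ℝ) : ℝ := Real.exp (-t^2/2) / Real.sqrt (2*Real.pi)

noncomputable def Phi (x : ℝ) : ℝ := ∫ s in Set.Iic x, phi s

lemma phi_nonneg (t : ℝ) : 0 ≤ phi t :=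
  div_nonneg (Real.exp_nonneg _) (Real.sqrt_nonneg _)

lemma phi_neg (t : ℝ) : phi (-t) = phi t := by simp [phi]

lemma continuous_phi : Continuous phi := by
  unfold phi; fun_prop

lemma phi_eq : phi = fun t => Real.exp (-(1/2) * t^2) / Real.sqrt (2*Real.pi) := by
  funext t; simp only [phi]; ring_nf

lemma integrable_phi : Integrable phi := by
  rw [phi_eq]
  exact (integrable_exp_neg_mul_sq (by norm_num : (0:ℝ) < 1/2)).div_const _

lemma sqrt_two_pi_pos : 0 < Real.sqrt (2*Real.pi) :=
  Real.sqrt_pos.mpr (by positivity)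

lemma integral_phi : ∫ t, phi t = 1 := by
  rw [phi_eq]
  rw [integral_div, integral_gaussian]
  rw [show Real.pi / (1/2) = 2 * Real.pi by ring]
  exact div_self sqrt_two_pi_pos.ne'

lemma hasDerivAt_phi (t : ℝ) : HasDerivAt phi (-t * phi t) t := by
  have h1 : HasDerivAt (fun t : ℝ => -t^2/2) (-t) t := by
    have h := ((hasDerivAt_pow 2 t).neg.div_const 2)
    refine h.congr_deriv ?_
    push_cast
    ring
  have h2 := (h1.exp).div_const (Real.sqrt (2*Real.pi))
  have : phi = fun t => Real.exp (-t^2/2) / Real.sqrt (2*Real.pi) := rfl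
  rw [this]
  refine h2.congr_deriv ?_
  simp only [phi]; ring

lemma integrable_mul_phi : Integrable (fun t => t * phi t) := by
  rw [phi_eq]
  have := (integrable_mul_exp_neg_mul_sq (by norm_num : (0:ℝ) < 1/2)).div_const (Real.sqrt (2*Real.pi))
  convert this using 2 with t
  ring

lemma phi_tendsto_atTop : Tendsto phi atTop (𝓝 0) := by
  have hsq : Tendsto (fun t : ℝ => -t^2/2) atTop atBot := by
    apply Filter.Tendsto.atBot_div_const (by norm_num : (0:ℝ) < 2)
    exact tendsto_neg_atTop_atBot.comp (tendsto_pow_atTop (by norm_num))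
  have h := (Real.tendsto_exp_atBot.comp hsq).div_const (Real.sqrt (2*Real.pi))
  rw [zero_div] at h
  exact h.congr (fun t => by simp [phi, Function.comp])

lemma phi_tendsto_atBot : Tendsto phi atBot (𝓝 0) := by
  have h := phi_tendsto_atTop.comp tendsto_neg_atBot_atTop
  exact h.congr (fun t => by simp [Function.comp, phi_neg])

lemma Phi_nonneg (x : ℝ) : 0 ≤ Phi x :=
  setIntegral_nonneg measurableSet_Iic (fun t _ => phi_nonneg t)

lemma Phi_le_one (x : ℝ) : Phi x ≤ 1 := by
  rw [← integral_phi]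
  exact setIntegral_le_integral integrable_phi (ae_of_all _ phi_nonneg)

lemma hasDerivAt_Phi (x : ℝ) : HasDerivAt Phi (phi x) x := by
  have key : Phi = fun x => Phi 0 + ∫ t in (0:ℝ)..x, phi t := by
    funext y
    have := intervalIntegral.integral_Iic_sub_Iic (integrable_phi.integrableOn)
      (integrable_phi.integrableOn) (a := (0:ℝ)) (b := y)
    rw [Phi, Phi]
    linarith [this]
  rw [key]
  have h := intervalIntegral.integral_hasDerivAt_right
    (continuous_phi.intervalIntegrable 0 x)
    (continuous_phi.stronglyMeasurableAtFilter _ _)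
    continuous_phi.continuousAt
  exact h.const_add _

lemma continuous_Phi : Continuous Phi :=
  continuous_iff_continuousAt.mpr (fun x => (hasDerivAt_Phi x).continuousAt)
lemma integrable_abs_mul_phi : Integrable (fun t => |t| * phi t) := by
  refine integrable_mul_phi.abs.congr (ae_of_all _ fun t => ?_)
  show |t * phi t| = |t| * phi t
  rw [abs_mul, abs_of_nonneg (phi_nonneg t)]

lemma phi_le (t : ℝ) : phi t ≤ (Real.sqrt (2*Real.pi))⁻¹ := by
  rw [phi, div_eq_mul_inv]
  have h1 : Real.exp (-t^2/2) ≤ 1 := Real.exp_le_one_iff.mpr (by nlinarith [sq_nonneg t])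
  nlinarith [inv_nonneg.mpr sqrt_two_pi_pos.le]

lemma integrable_phi_sq : Integrable (fun t => phi t * phi t) :=
  integrable_phi.bdd_mul continuous_phi.aestronglyMeasurable (c := (Real.sqrt (2*Real.pi))⁻¹)
    (ae_of_all _ fun t => by
      rw [Real.norm_eq_abs, abs_of_nonneg (phi_nonneg t)]; exact phi_le t)

lemma integrable_neg_mul_phi : Integrable (fun r : ℝ => -r * phi r) :=
  integrable_mul_phi.neg.congr (ae_of_all _ fun r => by simp only [Pi.neg_apply]; ring)

lemma integrable_K' : Integrable (fun s => -s * phi s * Phi (-s) - phi s * phi s) := by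
  refine Integrable.sub ?_ integrable_phi_sq
  have hb : Integrable (fun s => Phi (-s) * (-s * phi s)) := by
    refine Integrable.bdd_mul (c := 1) integrable_neg_mul_phi
      (continuous_Phi.comp continuous_neg).aestronglyMeasurable ?_
    exact ae_of_all _ fun s => by
      rw [Real.norm_eq_abs, abs_of_nonneg (Phi_nonneg _)]; exact Phi_le_one _
  exact hb.congr (ae_of_all _ fun s => by ring)

lemma hasDerivAt_K (s : ℝ) : HasDerivAt (fun s => phi s * Phi (-s))
    (-s * phi s * Phi (-s) - phi s * phi s) s := by
  have h2 : HasDerivAt (fun s : ℝ => Phi (-s)) (-phi (-s)) s := by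
    have := (hasDerivAt_Phi (-s)).comp s (hasDerivAt_neg s)
    exact this.congr_deriv (by ring)
  have h := (hasDerivAt_phi s).mul h2
  refine h.congr_deriv ?_
  rw [phi_neg]; ring

lemma K_tendsto_atTop : Tendsto (fun s => phi s * Phi (-s)) atTop (𝓝 0) :=
  squeeze_zero (fun s => mul_nonneg (phi_nonneg s) (Phi_nonneg _))
    (fun s => mul_le_of_le_one_right (phi_nonneg s) (Phi_le_one _)) phi_tendsto_atTop

lemma K_tendsto_atBot : Tendsto (fun s => phi s * Phi (-s)) atBot (𝓝 0) :=
  squeeze_zero (fun s => mul_nonneg (phi_nonneg s) (Phi_nonneg _))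
    (fun s => mul_le_of_le_one_right (phi_nonneg s) (Phi_le_one _)) phi_tendsto_atBot

lemma integral_K' : ∫ s, (-s * phi s * Phi (-s) - phi s * phi s) = 0 := by
  have h1 := integral_Iic_of_hasDerivAt_of_tendsto' (a := (0:ℝ))
    (fun x _ => hasDerivAt_K x) integrable_K'.integrableOn K_tendsto_atBot
  have h2 := integral_Ioi_of_hasDerivAt_of_tendsto' (a := (0:ℝ))
    (fun x _ => hasDerivAt_K x) integrable_K'.integrableOn K_tendsto_atTop
  have h3 := intervalIntegral.integral_Iic_add_Ioi (b := (0:ℝ))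
    integrable_K'.integrableOn integrable_K'.integrableOn
  rw [← h3, h1, h2]; ring

lemma integral_phi_sq_val : ∫ s, phi s * phi s = 1 / (2 * Real.sqrt Real.pi) := by
  have hpt : (fun s => phi s * phi s) = fun s => Real.exp (-1 * s^2) / (2*Real.pi) := by
    funext s
    rw [phi, div_mul_div_comm, ← Real.exp_add, Real.mul_self_sqrt (by positivity)]
    congr 1; ring
  rw [hpt, integral_div, integral_gaussian]
  have h0 : 0 < Real.sqrt Real.pi := Real.sqrt_pos.mpr Real.pi_pos
  have hπ : Real.sqrt Real.pi * Real.sqrt Real.pi = Real.pi :=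
    Real.mul_self_sqrt Real.pi_pos.le
  rw [div_one, div_eq_div_iff (by positivity) (by positivity)]
  nlinarith [hπ]

lemma integrable_phi_mul_inner : Integrable (fun s => phi s * (phi s + -s * Phi (-s))) := by
  have hpt : (fun s => phi s * (phi s + -s * Phi (-s)))
      = fun s => 2*(phi s * phi s) + (-s * phi s * Phi (-s) - phi s * phi s) :=
    funext fun s => by ring
  rw [hpt]
  exact (integrable_phi_sq.const_mul 2).add integrable_K'

lemma integral_outer : ∫ s, phi s * (phi s + -s * Phi (-s)) = 1 / Real.sqrt Real.pi := by
  have hpt : (fun s => phi s * (phi s + -s * Phi (-s)))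
      = fun s => 2*(phi s * phi s) + (-s * phi s * Phi (-s) - phi s * phi s) :=
    funext fun s => by ring
  rw [hpt, integral_add (integrable_phi_sq.const_mul 2) integrable_K', integral_K',
    integral_const_mul, integral_phi_sq_val]
  have h0 : 0 < Real.sqrt Real.pi := Real.sqrt_pos.mpr Real.pi_pos
  field_simp
  simp

lemma integrable_phi_mul_max (s : ℝ) : Integrable (fun r => phi r * max (-s - r) 0) := by
  refine Integrable.mono' ((integrable_phi.const_mul |s|).add integrable_abs_mul_phi)
    ((continuous_phi.mul ((continuous_const.sub continuous_id).max continuous_const)).aestronglyMeasurable)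
    (ae_of_all _ fun r => ?_)
  have h1 : (0:ℝ) ≤ max (-s - r) 0 := le_max_right _ _
  have h2 : max (-s - r) 0 ≤ |s| + |r| :=
    max_le (by have := neg_le_abs s; have := neg_le_abs r; linarith) (by positivity)
  simp only [Pi.add_apply]
  rw [Real.norm_eq_abs, abs_mul, abs_of_nonneg (phi_nonneg r), abs_of_nonneg h1]
  nlinarith [phi_nonneg r]

lemma inner_integral (s : ℝ) : ∫ r, phi r * max (-s - r) 0 = phi s + -s * Phi (-s) := by
  have h0 : ∀ r ∉ Set.Iic (-s), phi r * max (-s - r) 0 = 0 := by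
    intro r hr
    simp only [Set.mem_Iic, not_le] at hr
    rw [max_eq_right (by linarith), mul_zero]
  rw [← setIntegral_eq_integral_of_forall_compl_eq_zero h0]
  have hcg : ∀ r ∈ Set.Iic (-s), phi r * max (-s - r) 0 = -s * phi r + -r * phi r := by
    intro r hr
    simp only [Set.mem_Iic] at hr
    rw [max_eq_left (by linarith)]; ring
  rw [setIntegral_congr_fun measurableSet_Iic hcg,
    integral_add (integrable_phi.integrableOn.const_mul _) integrable_neg_mul_phi.integrableOn,
    integral_const_mul]
  have hIic : ∫ r in Set.Iic (-s), -r * phi r = phi (-s) := by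
    have h := integral_Iic_of_hasDerivAt_of_tendsto' (a := -s)
      (fun x _ => hasDerivAt_phi x) integrable_neg_mul_phi.integrableOn phi_tendsto_atBot
    simpa using h
  rw [hIic, phi_neg, Phi]
  ring

lemma inner_nonneg (s : ℝ) : 0 ≤ phi s + -s * Phi (-s) := by
  rw [← inner_integral s]
  exact integral_nonneg fun r => mul_nonneg (phi_nonneg r) (le_max_right _ _)
open scoped ENNReal
lemma measurable_p : Measurable (fun s => ENNReal.ofReal (phi s)) :=
  continuous_phi.measurable.ennreal_ofReal

lemma lintegral_p : ∫⁻ s, ENNReal.ofReal (phi s) = 1 := by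
  rw [← ofReal_integral_eq_lintegral_ofReal integrable_phi (ae_of_all _ phi_nonneg), integral_phi,
    ENNReal.ofReal_one]

lemma ofReal_Phi (x : ℝ) : ENNReal.ofReal (Phi x) = ∫⁻ s in Set.Iic x, ENNReal.ofReal (phi s) := by
  rw [Phi, ofReal_integral_eq_lintegral_ofReal integrable_phi.integrableOn
    (ae_restrict_of_ae (ae_of_all _ phi_nonneg))]

lemma core (b d σ : ℝ) (hσ : 0 < σ) (hbd : b ≤ d) :
    ∫⁻ t, ENNReal.ofReal (Phi ((t-b)/σ) * Phi ((d-t)/σ))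
      ≤ ENNReal.ofReal ((d-b) + σ / Real.sqrt Real.pi) := by
  set p : ℝ → ℝ≥0∞ := fun s => ENNReal.ofReal (phi s) with hp
  set S : ℝ → ℝ → ℝ≥0∞ := fun s t => if b + σ*s ≤ t then 1 else 0 with hS
  set R : ℝ → ℝ → ℝ≥0∞ := fun r t => if t ≤ d - σ*r then 1 else 0 with hR
  have hpmeas : Measurable p := measurable_p
  have hp_top : ∀ s, p s ≠ ⊤ := fun s => ENNReal.ofReal_ne_top
  have hS_le : ∀ s t, S s t ≤ 1 := fun s t => by rw [hS]; dsimp only; split_ifs <;> simp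
  have hR_le : ∀ r t, R r t ≤ 1 := fun r t => by rw [hR]; dsimp only; split_ifs <;> simp
  have hS_top : ∀ s t, S s t ≠ ⊤ := fun s t => ((hS_le s t).trans_lt (by norm_num)).ne
  have hSind : Measurable (fun q : ℝ × ℝ => S q.2 q.1) := by
    have hM : MeasurableSet {q : ℝ × ℝ | b + σ*q.2 ≤ q.1} :=
      measurableSet_le (by fun_prop) measurable_fst
    exact Measurable.ite hM measurable_const measurable_const
  have hRind : Measurable (fun q : ℝ × ℝ => R q.2 q.1) := by
    have hM : MeasurableSet {q : ℝ × ℝ | q.1 ≤ d - σ*q.2} :=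
      measurableSet_le measurable_fst (by fun_prop)
    exact Measurable.ite hM measurable_const measurable_const
  set C : ℝ → ℝ≥0∞ := fun t => ∫⁻ r, p r * R r t with hC
  have hC_meas : Measurable C := by
    apply Measurable.lintegral_prod_right' (f := fun q : ℝ × ℝ => p q.2 * R q.2 q.1)
    exact (hpmeas.comp measurable_snd).mul hRind
  have hC_le : ∀ t, C t ≤ 1 := by
    intro t
    calc C t ≤ ∫⁻ r, p r * 1 := lintegral_mono fun r => mul_le_mul_right (hR_le r t) _
    _ = 1 := by simp only [mul_one]; exact lintegral_p
  have hC_top : ∀ t, C t ≠ ⊤ := fun t => ((hC_le t).trans_lt (by norm_num)).ne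
  -- step 1: pointwise rewrite
  have h1 : ∀ t : ℝ, ENNReal.ofReal (Phi ((t-b)/σ) * Phi ((d-t)/σ))
      = (∫⁻ s, p s * S s t) * C t := by
    intro t
    rw [ENNReal.ofReal_mul (Phi_nonneg _), ofReal_Phi, ofReal_Phi]
    congr 1
    · rw [← lintegral_indicator measurableSet_Iic]
      congr 1; funext s
      simp only [Set.indicator_apply, Set.mem_Iic, hS]
      by_cases h : s ≤ (t-b)/σ
      · rw [if_pos h, if_pos, mul_one]
        have h2 := (le_div_iff₀ hσ).mp h
        have h3 : σ * s = s * σ := mul_comm _ _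
        linarith
      · rw [if_neg h, if_neg, mul_zero]
        intro hc
        apply h
        rw [le_div_iff₀ hσ]
        have h3 : σ * s = s * σ := mul_comm _ _
        linarith
    · rw [hC, ← lintegral_indicator measurableSet_Iic]
      congr 1; funext r
      simp only [Set.indicator_apply, Set.mem_Iic, hR]
      by_cases h : r ≤ (d-t)/σ
      · rw [if_pos h, if_pos, mul_one]
        have h2 := (le_div_iff₀ hσ).mp h
        have h3 : σ * r = r * σ := mul_comm _ _
        linarith
      · rw [if_neg h, if_neg, mul_zero]
        intro hc
        apply h
        rw [le_div_iff₀ hσ]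
        have h3 : σ * r = r * σ := mul_comm _ _
        linarith
  -- step 2: reduce to double gaussian integral
  have h2 : ∫⁻ t, ENNReal.ofReal (Phi ((t-b)/σ) * Phi ((d-t)/σ))
      = ∫⁻ s, p s * ∫⁻ r, p r * ENNReal.ofReal (d - σ*r - (b + σ*s)) := by
    calc ∫⁻ t, ENNReal.ofReal (Phi ((t-b)/σ) * Phi ((d-t)/σ))
        = ∫⁻ t, ∫⁻ s, p s * S s t * C t := by
          refine lintegral_congr fun t => ?_
          rw [h1 t, lintegral_mul_const' (C t) _ (hC_top t)]
      _ = ∫⁻ s, ∫⁻ t, p s * S s t * C t := by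
          apply lintegral_lintegral_swap
          apply Measurable.aemeasurable
          exact ((hpmeas.comp measurable_snd).mul hSind).mul (hC_meas.comp measurable_fst)
      _ = ∫⁻ s, p s * ∫⁻ r, p r * ENNReal.ofReal (d - σ*r - (b + σ*s)) := by
          refine lintegral_congr fun s => ?_
          calc ∫⁻ t, p s * S s t * C t
              = p s * ∫⁻ t, S s t * C t := by
                simp_rw [mul_assoc]
                exact lintegral_const_mul' _ _ (hp_top s)
            _ = p s * ∫⁻ r, p r * ∫⁻ t, S s t * R r t := by
                congr 1
                calc ∫⁻ t, S s t * C t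
                    = ∫⁻ t, ∫⁻ r, S s t * (p r * R r t) := by
                      refine lintegral_congr fun t => ?_
                      have hCt : C t = ∫⁻ r, p r * R r t := rfl
                      rw [hCt]
                      exact (lintegral_const_mul' _ _ (hS_top s t)).symm
                  _ = ∫⁻ r, ∫⁻ t, S s t * (p r * R r t) := by
                      apply lintegral_lintegral_swap
                      apply Measurable.aemeasurable
                      have hSfix : Measurable (fun q : ℝ × ℝ => S s q.1) := by
                        have hM : MeasurableSet {q : ℝ × ℝ | b + σ*s ≤ q.1} :=
                          measurableSet_le measurable_const measurable_fst
                        exact Measurable.ite hM measurable_const measurable_const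
                      exact hSfix.mul ((hpmeas.comp measurable_snd).mul hRind)
                  _ = ∫⁻ r, p r * ∫⁻ t, S s t * R r t := by
                      refine lintegral_congr fun r => ?_
                      simp_rw [mul_left_comm (S s _) (p r) (R r _)]
                      exact lintegral_const_mul' _ _ (hp_top r)
            _ = p s * ∫⁻ r, p r * ENNReal.ofReal (d - σ*r - (b + σ*s)) := by
                congr 1
                refine lintegral_congr fun r => ?_
                congr 1
                have hind : (fun t => S s t * R r t)
                    = Set.indicator (Set.Icc (b + σ*s) (d - σ*r)) (fun _ => 1) := by
                  funext t
                  simp only [Set.indicator_apply, Set.mem_Icc, hS, hR]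
                  by_cases hx : b + σ*s ≤ t <;> by_cases hy : t ≤ d - σ*r <;>
                    simp [hx, hy]
                rw [hind, lintegral_indicator measurableSet_Icc, setLIntegral_one,
                  Real.volume_Icc]
  rw [h2]
  -- step 3: bound the double integral
  have h3 : ∀ s r : ℝ, ENNReal.ofReal (d - σ*r - (b + σ*s))
      ≤ ENNReal.ofReal (d - b) + ENNReal.ofReal (σ * max (-s - r) 0) := by
    intro s r
    rw [← ENNReal.ofReal_add (by linarith) (mul_nonneg hσ.le (le_max_right _ _))]
    apply ENNReal.ofReal_le_ofReal
    have hm := mul_le_mul_of_nonneg_left (le_max_left (-s - r) 0) hσ.le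
    nlinarith
  calc ∫⁻ s, p s * ∫⁻ r, p r * ENNReal.ofReal (d - σ*r - (b + σ*s))
      ≤ ∫⁻ s, p s * ∫⁻ r, p r * (ENNReal.ofReal (d-b) + ENNReal.ofReal (σ * max (-s - r) 0)) := by
        refine lintegral_mono fun s => mul_le_mul_right (lintegral_mono fun r => ?_) _
        exact mul_le_mul_right (h3 s r) _
    _ = ∫⁻ s, p s * (ENNReal.ofReal (d-b)
          + ENNReal.ofReal σ * ENNReal.ofReal (phi s + -s * Phi (-s))) := by
        refine lintegral_congr fun s => ?_
        congr 1
        calc ∫⁻ r, p r * (ENNReal.ofReal (d-b) + ENNReal.ofReal (σ * max (-s - r) 0))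
            = ∫⁻ r, (p r * ENNReal.ofReal (d-b)
                + ENNReal.ofReal σ * (p r * ENNReal.ofReal (max (-s - r) 0))) := by
              refine lintegral_congr fun r => ?_
              rw [ENNReal.ofReal_mul hσ.le, mul_add]
              ring
          _ = ENNReal.ofReal (d-b)
                + ENNReal.ofReal σ * ∫⁻ r, p r * ENNReal.ofReal (max (-s - r) 0) := by
              rw [lintegral_add_left (hpmeas.mul_const _),
                lintegral_mul_const' _ _ ENNReal.ofReal_ne_top, lintegral_p, one_mul,
                lintegral_const_mul' _ _ ENNReal.ofReal_ne_top]
          _ = ENNReal.ofReal (d-b)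
                + ENNReal.ofReal σ * ENNReal.ofReal (phi s + -s * Phi (-s)) := by
              congr 1
              congr 1
              rw [← inner_integral s,
                ofReal_integral_eq_lintegral_ofReal (integrable_phi_mul_max s)
                  (ae_of_all _ fun r => mul_nonneg (phi_nonneg r) (le_max_right _ _))]
              refine lintegral_congr fun r => ?_
              rw [ENNReal.ofReal_mul (phi_nonneg r)]
    _ = ENNReal.ofReal (d-b) + ENNReal.ofReal σ * ENNReal.ofReal (1 / Real.sqrt Real.pi) := by
        rw [← integral_outer,
          ofReal_integral_eq_lintegral_ofReal integrable_phi_mul_inner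
            (ae_of_all _ fun s => mul_nonneg (phi_nonneg s) (inner_nonneg s))]
        calc ∫⁻ s, p s * (ENNReal.ofReal (d-b)
              + ENNReal.ofReal σ * ENNReal.ofReal (phi s + -s * Phi (-s)))
            = ∫⁻ s, (p s * ENNReal.ofReal (d-b)
                + ENNReal.ofReal σ * ENNReal.ofReal (phi s * (phi s + -s * Phi (-s)))) := by
              refine lintegral_congr fun s => ?_
              rw [mul_add, ENNReal.ofReal_mul (phi_nonneg s)]
              ring
          _ = ENNReal.ofReal (d-b)
                + ENNReal.ofReal σ * ∫⁻ s, ENNReal.ofReal (phi s * (phi s + -s * Phi (-s))) := by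
              rw [lintegral_add_left (hpmeas.mul_const _),
                lintegral_mul_const' _ _ ENNReal.ofReal_ne_top, lintegral_p, one_mul,
                lintegral_const_mul' _ _ ENNReal.ofReal_ne_top]
    _ ≤ ENNReal.ofReal ((d-b) + σ / Real.sqrt Real.pi) := by
        rw [← ENNReal.ofReal_mul hσ.le,
          ← ENNReal.ofReal_add (by linarith) (by positivity)]
        apply ENNReal.ofReal_le_ofReal
        rw [mul_one_div]
lemma G_meas (D : Multiset (ℝ × ℝ)) (σ : ℝ) :
    Measurable (fun t => (D.map (fun p => Phi ((t - p.1) / σ) * Phi ((p.2 - t) / σ))).sum) := by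
  induction D using Multiset.induction_on with
  | empty => simpa using measurable_const
  | cons a D ih =>
    simp only [Multiset.map_cons, Multiset.sum_cons]
    exact (((continuous_Phi.comp (by fun_prop)).mul
      (continuous_Phi.comp (by fun_prop))).measurable).add ih

lemma G_nonneg (D : Multiset (ℝ × ℝ)) (σ : ℝ) (t : ℝ) :
    0 ≤ (D.map (fun p => Phi ((t - p.1) / σ) * Phi ((p.2 - t) / σ))).sum := by
  apply Multiset.sum_nonneg
  intro x hx
  obtain ⟨q, hq, rfl⟩ := Multiset.mem_map.mp hx
  exact mul_nonneg (Phi_nonneg _) (Phi_nonneg _)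

lemma main_lintegral (σ δ : ℝ) (hσ : 0 < σ) (hδ : 0 < δ) (D : Multiset (ℝ × ℝ)) :
    (∀ p ∈ D, p.1 < p.2) → (∀ p ∈ D, δ ≤ p.2 - p.1) →
    ∫⁻ t, ENNReal.ofReal ((D.map (fun p => Phi ((t - p.1)/σ) * Phi ((p.2 - t)/σ))).sum)
      ≤ ENNReal.ofReal ((1 + σ/(Real.sqrt Real.pi * δ)) * (D.map (fun p => p.2 - p.1)).sum) := by
  have hsqpi : 0 < Real.sqrt Real.pi := Real.sqrt_pos.mpr Real.pi_pos
  have hc : 0 ≤ 1 + σ/(Real.sqrt Real.pi * δ) := by positivity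
  induction D using Multiset.induction_on with
  | empty => intro _ _; simp
  | cons a D ih =>
    intro hD hmin
    have ha1 : a.1 < a.2 := hD a (Multiset.mem_cons_self a D)
    have ha2 : δ ≤ a.2 - a.1 := hmin a (Multiset.mem_cons_self a D)
    have hD' : ∀ p ∈ D, p.1 < p.2 := fun p hp => hD p (Multiset.mem_cons_of_mem hp)
    have hmin' : ∀ p ∈ D, δ ≤ p.2 - p.1 := fun p hp => hmin p (Multiset.mem_cons_of_mem hp)
    have hLD : 0 ≤ (D.map (fun p => p.2 - p.1)).sum := by
      apply Multiset.sum_nonneg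
      intro x hx
      obtain ⟨q, hq, rfl⟩ := Multiset.mem_map.mp hx
      linarith [hD' q hq]
    have hterm : ∫⁻ t, ENNReal.ofReal (Phi ((t - a.1)/σ) * Phi ((a.2 - t)/σ))
        ≤ ENNReal.ofReal ((1 + σ/(Real.sqrt Real.pi * δ)) * (a.2 - a.1)) := by
      refine (core a.1 a.2 σ hσ ha1.le).trans (ENNReal.ofReal_le_ofReal ?_)
      have hkey : σ / Real.sqrt Real.pi ≤ σ/(Real.sqrt Real.pi * δ) * (a.2 - a.1) := by
        rw [div_mul_eq_mul_div, div_le_div_iff₀ hsqpi (mul_pos hsqpi hδ)]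
        nlinarith [mul_le_mul_of_nonneg_left ha2 (mul_pos hσ hsqpi).le]
      nlinarith
    simp only [Multiset.map_cons, Multiset.sum_cons]
    calc ∫⁻ t, ENNReal.ofReal (Phi ((t - a.1)/σ) * Phi ((a.2 - t)/σ)
            + (D.map (fun p => Phi ((t - p.1)/σ) * Phi ((p.2 - t)/σ))).sum)
        = ∫⁻ t, (ENNReal.ofReal (Phi ((t - a.1)/σ) * Phi ((a.2 - t)/σ))
            + ENNReal.ofReal ((D.map (fun p => Phi ((t - p.1)/σ) * Phi ((p.2 - t)/σ))).sum)) := by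
          refine lintegral_congr fun t => ?_
          exact ENNReal.ofReal_add (mul_nonneg (Phi_nonneg _) (Phi_nonneg _)) (G_nonneg D σ t)
      _ = (∫⁻ t, ENNReal.ofReal (Phi ((t - a.1)/σ) * Phi ((a.2 - t)/σ)))
            + ∫⁻ t, ENNReal.ofReal ((D.map (fun p => Phi ((t - p.1)/σ) * Phi ((p.2 - t)/σ))).sum) := by
          apply lintegral_add_left
          exact (((continuous_Phi.comp (by fun_prop)).mul
            (continuous_Phi.comp (by fun_prop))).measurable).ennreal_ofReal
      _ ≤ ENNReal.ofReal ((1 + σ/(Real.sqrt Real.pi * δ)) * (a.2 - a.1))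
            + ENNReal.ofReal ((1 + σ/(Real.sqrt Real.pi * δ)) * (D.map (fun p => p.2 - p.1)).sum) :=
          add_le_add hterm (ih hD' hmin')
      _ = ENNReal.ofReal ((1 + σ/(Real.sqrt Real.pi * δ)) * ((a.2 - a.1) + (D.map (fun p => p.2 - p.1)).sum)) := by
          rw [← ENNReal.ofReal_add (by nlinarith) (by nlinarith)]
          congr 1
          ring

theorem stmt11 (D : Multiset (ℝ × ℝ)) (hD : ∀ p ∈ D, p.1 < p.2) (σ δ : ℝ)
    (hσ : 0 < σ) (hδ : 0 < δ)
    (hmin : ∀ p ∈ D, δ ≤ p.2 - p.1) (hmem : δ ∈ D.map (fun p => p.2 - p.1)) :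
    ∫ t : ℝ, |(D.map (fun p => Phi ((t - p.1) / σ) * Phi ((p.2 - t) / σ))).sum| ≤
      (1 + σ / (Real.sqrt Real.pi * δ)) * (D.map (fun p => p.2 - p.1)).sum := by
  have hsqpi : 0 < Real.sqrt Real.pi := Real.sqrt_pos.mpr Real.pi_pos
  have habs : ∫ t : ℝ, |(D.map (fun p => Phi ((t - p.1) / σ) * Phi ((p.2 - t) / σ))).sum|
      = ∫ t : ℝ, (D.map (fun p => Phi ((t - p.1) / σ) * Phi ((p.2 - t) / σ))).sum :=
    integral_congr_ae (ae_of_all _ fun t => abs_of_nonneg (G_nonneg D σ t))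
  rw [habs, integral_eq_lintegral_of_nonneg_ae (ae_of_all _ (G_nonneg D σ))
    (G_meas D σ).aestronglyMeasurable]
  apply ENNReal.toReal_le_of_le_ofReal
  · apply mul_nonneg (by positivity)
    apply Multiset.sum_nonneg
    intro x hx
    obtain ⟨q, hq, rfl⟩ := Multiset.mem_map.mp hx
    linarith [hD q hq]
  · exact main_lintegral σ δ hσ hδ D hD hmin
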